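/- Let F(ω,x) = (Sω, f_ω(x)) be a skew product with monotone fibre maps, and define σ^±(ω,x) := lim_{ε→0} log Σ^±_ε(ω,x)/log ε where Σ^±_ε(ω,x) = m²(U_ε(ω,x) ∩ B^±)/m²(U_ε(ω,x)) and U_ε is the ε-square around (ω,x). Assume S is locally bi-Lipschitz at ω with S-image neighborhoods comparable, and the fibre maps are bi-Lipschitz. Then whenever the limits defining σ^±(F(ω,x)) and σ^±(ω,x) exist, σ^±(F(ω,x)) = σ^±(ω,x). -/

import Mathlib

open MeasureTheory Set Filter

/-- The ε-square around a point of `ℝ²`. -/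
def epsSquare (ε : ℝ) (p : ℝ × ℝ) : Set (ℝ × ℝ) :=
  Icc (p.1 - ε) (p.1 + ε) ×ˢ Icc (p.2 - ε) (p.2 + ε)

/-- Relative measure of the basin `B` in the ε-square around `p`. -/
noncomputable def SigmaFrac (B : Set (ℝ × ℝ)) (ε : ℝ) (p : ℝ × ℝ) : ℝ :=
  (volume (epsSquare ε p ∩ B)).toReal / (volume (epsSquare ε p)).toReal

private lemma invlog_tendsto :
    Tendsto (fun ε : ℝ => (Real.log ε)⁻¹) (nhdsWithin 0 (Ioi 0)) (nhds 0) := by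
  have h : Tendsto (fun ε : ℝ => -Real.log ε) (nhdsWithin 0 (Ioi 0)) atTop :=
    tendsto_neg_atTop_iff.mpr Real.tendsto_log_nhdsGT_zero
  have h3 := h.inv_tendsto_atTop.neg
  rw [neg_zero] at h3
  refine h3.congr (fun x => ?_)
  simp [inv_neg]

private lemma vol_epsSquare (ε : ℝ) (q : ℝ × ℝ) :
    volume (epsSquare ε q) = ENNReal.ofReal (2*ε) * ENNReal.ofReal (2*ε) := by
  have e : ∀ a : ℝ, a + ε - (a - ε) = 2*ε := by intro a; ring
  rw [epsSquare, Measure.volume_eq_prod, Measure.prod_prod, Real.volume_Icc, Real.volume_Icc, e, e]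

private lemma vol_inter_ne_top (ε : ℝ) (q : ℝ × ℝ) (B : Set (ℝ × ℝ)) :
    volume (epsSquare ε q ∩ B) ≠ ⊤ := by
  refine ne_top_of_le_ne_top ?_ (measure_mono inter_subset_left)
  rw [vol_epsSquare]
  exact ENNReal.mul_ne_top ENNReal.ofReal_ne_top ENNReal.ofReal_ne_top

/-- Generic comparison lemma: if `h (ε/K) ≤ K * g ε` for small `ε`, both positive,
and both log-scaling exponents exist, then `sa ≤ sb`. -/
private lemma key_comp (g h : ℝ → ℝ) (K ε₁ : ℝ) (hK : 1 ≤ K) (hε₁ : 0 < ε₁)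
    (hgpos : ∀ ε ∈ Ioo (0:ℝ) ε₁, 0 < g ε) (hhpos : ∀ ε ∈ Ioo (0:ℝ) ε₁, 0 < h ε)
    (hle : ∀ ε ∈ Ioo (0:ℝ) ε₁, h (ε / K) ≤ K * g ε)
    (sa sb : ℝ)
    (ha : Tendsto (fun ε => Real.log (g ε) / Real.log ε) (nhdsWithin 0 (Ioi 0)) (nhds sa))
    (hb : Tendsto (fun ε => Real.log (h ε) / Real.log ε) (nhdsWithin 0 (Ioi 0)) (nhds sb)) :
    sa ≤ sb := by
  have hK0 : (0:ℝ) < K := lt_of_lt_of_le one_pos hK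
  have hlogK : 0 ≤ Real.log K := Real.log_nonneg hK
  -- composition
  have hdiv : Tendsto (fun ε : ℝ => ε / K) (nhdsWithin 0 (Ioi 0)) (nhdsWithin 0 (Ioi 0)) := by
    rw [tendsto_nhdsWithin_iff]
    constructor
    · have : Tendsto (fun ε : ℝ => ε / K) (nhds 0) (nhds (0 / K)) := tendsto_id.div_const K
      rw [zero_div] at this
      exact this.mono_left nhdsWithin_le_nhds
    · filter_upwards [self_mem_nhdsWithin] with ε (hε : ε ∈ Ioi 0)
      exact div_pos hε hK0
  have hB : Tendsto (fun ε => Real.log (h (ε / K)) / Real.log (ε / K))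
      (nhdsWithin 0 (Ioi 0)) (nhds sb) := hb.comp hdiv
  -- T2 : log ε / (log ε - log K) → 1
  have hT2 : Tendsto (fun ε : ℝ => Real.log ε / (Real.log ε - Real.log K))
      (nhdsWithin 0 (Ioi 0)) (nhds 1) := by
    have h1 : Tendsto (fun ε : ℝ => 1 - Real.log K * (Real.log ε)⁻¹)
        (nhdsWithin 0 (Ioi 0)) (nhds (1 - Real.log K * 0)) :=
      tendsto_const_nhds.sub (tendsto_const_nhds.mul invlog_tendsto)
    rw [mul_zero, sub_zero] at h1
    have h2 := h1.inv₀ (by norm_num)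
    rw [inv_one] at h2
    refine h2.congr' ?_
    filter_upwards [Ioo_mem_nhdsGT_of_mem (show (0:ℝ) ∈ Ico 0 1 from ⟨le_refl 0, one_pos⟩)]
      with ε hε
    have hu : Real.log ε < 0 := Real.log_neg hε.1 hε.2
    have hu' : Real.log ε ≠ 0 := ne_of_lt hu
    have : 1 - Real.log K * (Real.log ε)⁻¹ = (Real.log ε - Real.log K) / Real.log ε := by
      field_simp
    rw [this, inv_div]
  -- RHS tendsto sa
  have hRHS : Tendsto (fun ε : ℝ =>
      (Real.log K * (Real.log ε)⁻¹ + Real.log (g ε) / Real.log ε) *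
        (Real.log ε / (Real.log ε - Real.log K)))
      (nhdsWithin 0 (Ioi 0)) (nhds sa) := by
    have := (((tendsto_const_nhds (x := Real.log K)).mul invlog_tendsto).add ha).mul hT2
    rw [mul_zero, zero_add, mul_one] at this
    exact this
  -- eventual inequality
  have hineq : ∀ᶠ ε in nhdsWithin (0:ℝ) (Ioi 0),
      (Real.log K * (Real.log ε)⁻¹ + Real.log (g ε) / Real.log ε) *
        (Real.log ε / (Real.log ε - Real.log K)) ≤
      Real.log (h (ε / K)) / Real.log (ε / K) := by
    have hmin : (0:ℝ) < min ε₁ 1 := lt_min hε₁ one_pos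
    filter_upwards [Ioo_mem_nhdsGT_of_mem (show (0:ℝ) ∈ Ico 0 (min ε₁ 1) from ⟨le_refl 0, hmin⟩)]
      with ε hε
    have hε0 : 0 < ε := hε.1
    have hεε₁ : ε < ε₁ := lt_of_lt_of_le hε.2 (min_le_left _ _)
    have hε1 : ε < 1 := lt_of_lt_of_le hε.2 (min_le_right _ _)
    have hu : Real.log ε < 0 := Real.log_neg hε0 hε1
    have hu' : Real.log ε ≠ 0 := ne_of_lt hu
    have huc : Real.log ε - Real.log K < 0 := by linarith
    have hεK : ε / K ∈ Ioo (0:ℝ) ε₁ := by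
      constructor
      · exact div_pos hε0 hK0
      · calc ε / K ≤ ε / 1 := by
              apply div_le_div_of_nonneg_left (le_of_lt hε0) one_pos hK
          _ = ε := div_one ε
          _ < ε₁ := hεε₁
    have hgε : 0 < g ε := hgpos ε ⟨hε0, hεε₁⟩
    have hhεK : 0 < h (ε / K) := hhpos _ hεK
    have hlogle : Real.log (h (ε / K)) ≤ Real.log K + Real.log (g ε) := by
      have := Real.log_le_log hhεK (hle ε ⟨hε0, hεε₁⟩)
      rwa [Real.log_mul (ne_of_gt hK0) (ne_of_gt hgε)] at this
    have hlogdiv : Real.log (ε / K) = Real.log ε - Real.log K :=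
      Real.log_div (ne_of_gt hε0) (ne_of_gt hK0)
    rw [hlogdiv]
    have step1 : (Real.log K + Real.log (g ε)) / (Real.log ε - Real.log K) ≤
        Real.log (h (ε / K)) / (Real.log ε - Real.log K) := by
      rw [div_eq_mul_inv, div_eq_mul_inv]
      exact mul_le_mul_of_nonpos_right hlogle (inv_nonpos.mpr (le_of_lt huc))
    refine le_trans (le_of_eq ?_) step1
    have : (Real.log K * (Real.log ε)⁻¹ + Real.log (g ε) / Real.log ε) =
        (Real.log K + Real.log (g ε)) / Real.log ε := by
      field_simp
    rw [this, div_mul_div_comm, mul_comm (Real.log ε) _, mul_div_mul_right _ _ hu']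
  exact le_of_tendsto_of_tendsto hRHS hB hineq

/-- From the limit of `SigmaFrac` deduce the limit of the raw intersection volume. -/
private lemma aux_limit (B : Set (ℝ × ℝ)) (q : ℝ × ℝ) (ε₁ : ℝ) (hε₁ : 0 < ε₁)
    (hne : ∀ ε ∈ Ioo (0:ℝ) ε₁, volume (epsSquare ε q ∩ B) ≠ 0) (s : ℝ)
    (hs : Tendsto (fun ε => Real.log (SigmaFrac B ε q) / Real.log ε)
      (nhdsWithin 0 (Ioi 0)) (nhds s)) :
    Tendsto (fun ε => Real.log ((volume (epsSquare ε q ∩ B)).toReal) / Real.log ε)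
      (nhdsWithin 0 (Ioi 0)) (nhds (s + 2)) := by
  have h1 : Tendsto (fun ε : ℝ => Real.log (SigmaFrac B ε q) / Real.log ε +
      ((2 * Real.log 2) * (Real.log ε)⁻¹ + 2))
      (nhdsWithin 0 (Ioi 0)) (nhds (s + ((2 * Real.log 2) * 0 + 2))) :=
    hs.add (((tendsto_const_nhds (x := 2 * Real.log 2)).mul invlog_tendsto).add tendsto_const_nhds)
  rw [mul_zero, zero_add] at h1
  refine h1.congr' ?_
  have hmin : (0:ℝ) < min ε₁ 1 := lt_min hε₁ one_pos
  filter_upwards [Ioo_mem_nhdsGT_of_mem (show (0:ℝ) ∈ Ico 0 (min ε₁ 1) from ⟨le_refl 0, hmin⟩)]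
    with ε hε
  have hε0 : 0 < ε := hε.1
  have hεε₁ : ε < ε₁ := lt_of_lt_of_le hε.2 (min_le_left _ _)
  have hε1 : ε < 1 := lt_of_lt_of_le hε.2 (min_le_right _ _)
  have hu' : Real.log ε ≠ 0 := ne_of_lt (Real.log_neg hε0 hε1)
  have hg0 : 0 < (volume (epsSquare ε q ∩ B)).toReal :=
    ENNReal.toReal_pos (hne ε ⟨hε0, hεε₁⟩) (vol_inter_ne_top ε q B)
  have h2ε : (0:ℝ) < 2 * ε := by linarith
  have hvol : (volume (epsSquare ε q)).toReal = (2*ε) * (2*ε) := by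
    rw [vol_epsSquare, ENNReal.toReal_mul, ENNReal.toReal_ofReal (le_of_lt h2ε)]
  have hSig : SigmaFrac B ε q = (volume (epsSquare ε q ∩ B)).toReal / ((2*ε) * (2*ε)) := by
    simp only [SigmaFrac]; rw [hvol]
  have hlogSig : Real.log (SigmaFrac B ε q) =
      Real.log ((volume (epsSquare ε q ∩ B)).toReal) - (2 * Real.log 2 + 2 * Real.log ε) := by
    rw [hSig, Real.log_div (ne_of_gt hg0) (by positivity)]
    rw [Real.log_mul (ne_of_gt h2ε) (ne_of_gt h2ε),
      Real.log_mul (by norm_num) (ne_of_gt hε0)]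
    ring
  rw [hlogSig]
  field_simp
  ring

theorem stmt19 (F : ℝ × ℝ → ℝ × ℝ) (B : Set (ℝ × ℝ))
    (hinj : Function.Injective F) (hBinv : F ⁻¹' B = B)
    (p : ℝ × ℝ) (K ε₀ : ℝ) (hK : 1 ≤ K) (hε₀ : 0 < ε₀)
    (hsand : ∀ ε ∈ Ioo (0 : ℝ) ε₀,
      epsSquare (ε / K) (F p) ⊆ F '' epsSquare ε p ∧ F '' epsSquare ε p ⊆ epsSquare (K * ε) (F p))
    (harea : ∀ A : Set (ℝ × ℝ),
      volume (F '' A) ≤ ENNReal.ofReal K * volume A ∧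
      volume A ≤ ENNReal.ofReal K * volume (F '' A))
    (s s' : ℝ)
    (hs : Tendsto (fun ε => Real.log (SigmaFrac B ε p) / Real.log ε)
      (nhdsWithin 0 (Ioi 0)) (nhds s))
    (hs' : Tendsto (fun ε => Real.log (SigmaFrac B ε (F p)) / Real.log ε)
      (nhdsWithin 0 (Ioi 0)) (nhds s')) :
    s' = s := by
  have hK0 : (0:ℝ) < K := lt_of_lt_of_le one_pos hK
  set g : ℝ → ℝ := fun ε => (volume (epsSquare ε p ∩ B)).toReal with hgdef
  set h : ℝ → ℝ := fun ε => (volume (epsSquare ε (F p) ∩ B)).toReal with hhdef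
  -- basic image identities
  have himg : ∀ ε : ℝ, F '' (epsSquare ε p ∩ B) = F '' epsSquare ε p ∩ B := by
    intro ε
    rw [← Set.image_inter_preimage F _ B, hBinv]
  -- key measure inequalities
  have key1 : ∀ ε ∈ Ioo (0:ℝ) ε₀,
      volume (epsSquare (ε / K) (F p) ∩ B) ≤ ENNReal.ofReal K * volume (epsSquare ε p ∩ B) := by
    intro ε hε
    have hsub : epsSquare (ε / K) (F p) ∩ B ⊆ F '' (epsSquare ε p ∩ B) := by
      rw [himg]
      exact inter_subset_inter_left B (hsand ε hε).1
    exact le_trans (measure_mono hsub) (harea _).1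
  have key2 : ∀ ε ∈ Ioo (0:ℝ) ε₀,
      volume (epsSquare ε p ∩ B) ≤ ENNReal.ofReal K * volume (epsSquare (K * ε) (F p) ∩ B) := by
    intro ε hε
    have hsub : F '' (epsSquare ε p ∩ B) ⊆ epsSquare (K * ε) (F p) ∩ B := by
      rw [himg]
      exact inter_subset_inter_left B (hsand ε hε).2
    exact le_trans (harea _).2 (mul_le_mul_right (measure_mono hsub) _)
  -- real versions
  have key1' : ∀ ε ∈ Ioo (0:ℝ) ε₀, h (ε / K) ≤ K * g ε := by
    intro ε hε
    have := ENNReal.toReal_mono (a := volume (epsSquare (ε / K) (F p) ∩ B))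
      (ENNReal.mul_ne_top ENNReal.ofReal_ne_top (vol_inter_ne_top ε p B)) (key1 ε hε)
    rwa [ENNReal.toReal_mul, ENNReal.toReal_ofReal (le_of_lt hK0)] at this
  have key2' : ∀ ε ∈ Ioo (0:ℝ) ε₀, g ε ≤ K * h (K * ε) := by
    intro ε hε
    have := ENNReal.toReal_mono (a := volume (epsSquare ε p ∩ B))
      (ENNReal.mul_ne_top ENNReal.ofReal_ne_top (vol_inter_ne_top (K*ε) (F p) B)) (key2 ε hε)
    rwa [ENNReal.toReal_mul, ENNReal.toReal_ofReal (le_of_lt hK0)] at this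
  by_cases hpos : ∀ ε ∈ Ioo (0:ℝ) ε₀, volume (epsSquare ε p ∩ B) ≠ 0
  · -- nondegenerate case
    have hgpos : ∀ ε ∈ Ioo (0:ℝ) ε₀, 0 < g ε := fun ε hε =>
      ENNReal.toReal_pos (hpos ε hε) (vol_inter_ne_top ε p B)
    have hhpos : ∀ δ ∈ Ioo (0:ℝ) ε₀, 0 < h δ := by
      intro δ hδ
      have hδK : δ / K ∈ Ioo (0:ℝ) ε₀ := by
        constructor
        · exact div_pos hδ.1 hK0
        · calc δ / K ≤ δ / 1 := div_le_div_of_nonneg_left (le_of_lt hδ.1) one_pos hK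
            _ = δ := div_one δ
            _ < ε₀ := hδ.2
      have := key2' _ hδK
      rw [mul_div_cancel₀ _ (ne_of_gt hK0)] at this
      nlinarith [hgpos _ hδK]
    have hhne : ∀ ε ∈ Ioo (0:ℝ) ε₀, volume (epsSquare ε (F p) ∩ B) ≠ 0 := by
      intro ε hε
      intro hzero
      have := hhpos ε hε
      rw [hhdef] at this
      simp only [hzero, ENNReal.toReal_zero] at this
      exact lt_irrefl 0 this
    have ha : Tendsto (fun ε => Real.log (g ε) / Real.log ε)
        (nhdsWithin 0 (Ioi 0)) (nhds (s + 2)) := aux_limit B p ε₀ hε₀ hpos s hs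
    have hb : Tendsto (fun ε => Real.log (h ε) / Real.log ε)
        (nhdsWithin 0 (Ioi 0)) (nhds (s' + 2)) := aux_limit B (F p) ε₀ hε₀ hhne s' hs'
    have h1 : s + 2 ≤ s' + 2 :=
      key_comp g h K ε₀ hK hε₀ hgpos hhpos key1' (s+2) (s'+2) ha hb
    have h2 : s' + 2 ≤ s + 2 := by
      refine key_comp h g K ε₀ hK hε₀ hhpos hgpos ?_ (s'+2) (s+2) hb ha
      intro δ hδ
      have hδK : δ / K ∈ Ioo (0:ℝ) ε₀ := by
        constructor
        · exact div_pos hδ.1 hK0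
        · calc δ / K ≤ δ / 1 := div_le_div_of_nonneg_left (le_of_lt hδ.1) one_pos hK
            _ = δ := div_one δ
            _ < ε₀ := hδ.2
      have := key2' _ hδK
      rwa [mul_div_cancel₀ _ (ne_of_gt hK0)] at this
    linarith
  · -- degenerate case: some square has zero intersection volume
    push_neg at hpos
    obtain ⟨ε₁, hε₁, hz⟩ := hpos
    -- g vanishes on (0, ε₁)
    have hgz : ∀ ε ∈ Ioo (0:ℝ) ε₁, volume (epsSquare ε p ∩ B) = 0 := by
      intro ε hε
      refine measure_mono_null ?_ hz
      apply inter_subset_inter_left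
      rw [epsSquare, epsSquare]
      apply Set.prod_mono <;> apply Icc_subset_Icc <;> nlinarith [hε.1, hε.2]
    -- hence s = 0
    have hs0 : s = 0 := by
      have hc : Tendsto (fun ε : ℝ => Real.log (SigmaFrac B ε p) / Real.log ε)
          (nhdsWithin 0 (Ioi 0)) (nhds 0) := by
        refine Tendsto.congr' ?_ tendsto_const_nhds
        filter_upwards [Ioo_mem_nhdsGT_of_mem (show (0:ℝ) ∈ Ico 0 ε₁ from ⟨le_refl 0, hε₁.1⟩)]
          with ε hε
        rw [SigmaFrac, hgz ε hε]
        simp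
      exact tendsto_nhds_unique hs hc
    -- h vanishes on (0, ε₁/K)
    have hhz : ∀ δ ∈ Ioo (0:ℝ) (ε₁ / K), h δ = 0 := by
      intro δ hδ
      have hδK : K * δ ∈ Ioo (0:ℝ) ε₁ := by
        constructor
        · exact mul_pos hK0 hδ.1
        · exact (lt_div_iff₀' hK0).mp hδ.2
      have hKδε₀ : K * δ ∈ Ioo (0:ℝ) ε₀ := ⟨hδK.1, lt_trans hδK.2 hε₁.2⟩
      have h1 := key1' (K * δ) hKδε₀
      rw [mul_div_cancel_left₀ _ (ne_of_gt hK0)] at h1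
      have hg0 : g (K * δ) = 0 := by
        rw [hgdef]; simp only [hgz _ hδK, ENNReal.toReal_zero]
      rw [hg0, mul_zero] at h1
      exact le_antisymm h1 ENNReal.toReal_nonneg
    have hs'0 : s' = 0 := by
      have hc : Tendsto (fun ε : ℝ => Real.log (SigmaFrac B ε (F p)) / Real.log ε)
          (nhdsWithin 0 (Ioi 0)) (nhds 0) := by
        refine Tendsto.congr' ?_ tendsto_const_nhds
        have hpos' : (0:ℝ) < ε₁ / K := div_pos hε₁.1 hK0
        filter_upwards [Ioo_mem_nhdsGT_of_mem
          (show (0:ℝ) ∈ Ico 0 (ε₁ / K) from ⟨le_refl 0, hpos'⟩)] with ε hε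
        have : (volume (epsSquare ε (F p) ∩ B)).toReal = 0 := hhz ε hε
        rw [SigmaFrac, this]
        simp
      exact tendsto_nhds_unique hs' hc
    rw [hs0, hs'0]
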